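/- arXiv:2009.08890 — 9 statements merged into one kernel-verified Lean document; each statement's English description precedes it below -/
import Mathlib

section
/- For all real z with 0 ≤ z ≤ 1, we have z + z³/3 ≤ tan(z) ≤ z + 2z³/3. -/
open Real

private lemma nonneg_of_hasDerivAt (f f' : ℝ → ℝ)
    (hf : ∀ x, HasDerivAt f (f' x) x) (h0 : f 0 = 0)
    (hd : ∀ x, 0 ≤ x → 0 ≤ f' x) {x : ℝ} (hx : 0 ≤ x) : 0 ≤ f x := by
  have hdiff : Differentiable ℝ f := fun x => (hf x).differentiableAt
  have hmono : MonotoneOn f (Set.Ici (0:ℝ)) := by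
    apply monotoneOn_of_deriv_nonneg (convex_Ici 0) hdiff.continuous.continuousOn
      hdiff.differentiableOn
    intro y hy
    rw [(hf y).deriv]
    rw [interior_Ici] at hy
    exact hd y (le_of_lt hy)
  have := hmono (Set.self_mem_Ici) hx hx
  rwa [h0] at this

private lemma sin_ge_taylor {x : ℝ} (hx : 0 ≤ x) : x - x ^ 3 / 6 ≤ Real.sin x := by
  have h := nonneg_of_hasDerivAt (fun x => Real.sin x - (x - x ^ 3 / 6))
      (fun x => Real.cos x - (1 - x ^ 2 / 2))
      (fun x => by
        have h := (Real.hasDerivAt_sin x).sub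
          ((hasDerivAt_id x).sub ((hasDerivAt_pow 3 x).div_const 6))
        convert h using 1
        rfl; rfl; rfl
        simp; ring)
      (by simp) (fun x _ => sub_nonneg.2 (Real.one_sub_sq_div_two_le_cos)) hx
  linarith [h]

private lemma cos_le_taylor {x : ℝ} (hx : 0 ≤ x) : Real.cos x ≤ 1 - x ^ 2 / 2 + x ^ 4 / 24 := by
  have h := nonneg_of_hasDerivAt (fun x => (1 - x ^ 2 / 2 + x ^ 4 / 24) - Real.cos x)
      (fun x => Real.sin x - (x - x ^ 3 / 6))
      (fun x => by
        have h := (((hasDerivAt_const x (1:ℝ)).sub ((hasDerivAt_pow 2 x).div_const 2)).add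
          ((hasDerivAt_pow 4 x).div_const 24)).sub (Real.hasDerivAt_cos x)
        convert h using 1
        rfl; rfl; rfl
        simp; ring)
      (by simp) (fun y hy => sub_nonneg.2 (sin_ge_taylor hy)) hx
  linarith [h]

private lemma sin_le_taylor {x : ℝ} (hx : 0 ≤ x) :
    Real.sin x ≤ x - x ^ 3 / 6 + x ^ 5 / 120 := by
  have h := nonneg_of_hasDerivAt (fun x => (x - x ^ 3 / 6 + x ^ 5 / 120) - Real.sin x)
      (fun x => (1 - x ^ 2 / 2 + x ^ 4 / 24) - Real.cos x)
      (fun x => by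
        have h := (((hasDerivAt_id x).sub ((hasDerivAt_pow 3 x).div_const 6)).add
          ((hasDerivAt_pow 5 x).div_const 120)).sub (Real.hasDerivAt_sin x)
        convert h using 1
        rfl; rfl; rfl
        simp; ring)
      (by simp) (fun y hy => sub_nonneg.2 (cos_le_taylor hy)) hx
  linarith [h]

private lemma cos_ge_taylor {x : ℝ} (hx : 0 ≤ x) :
    1 - x ^ 2 / 2 + x ^ 4 / 24 - x ^ 6 / 720 ≤ Real.cos x := by
  have h := nonneg_of_hasDerivAt
      (fun x => Real.cos x - (1 - x ^ 2 / 2 + x ^ 4 / 24 - x ^ 6 / 720))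
      (fun x => (x - x ^ 3 / 6 + x ^ 5 / 120) - Real.sin x)
      (fun x => by
        have h := (Real.hasDerivAt_cos x).sub
          ((((hasDerivAt_const x (1:ℝ)).sub ((hasDerivAt_pow 2 x).div_const 2)).add
            ((hasDerivAt_pow 4 x).div_const 24)).sub ((hasDerivAt_pow 6 x).div_const 720))
        convert h using 1
        rfl; rfl; rfl
        simp; ring)
      (by simp) (fun y hy => sub_nonneg.2 (sin_le_taylor hy)) hx
  linarith [h]

theorem tan_bounds (z : ℝ) (h0 : 0 ≤ z) (h1 : z ≤ 1) :
    z + z ^ 3 / 3 ≤ Real.tan z ∧ Real.tan z ≤ z + 2 * z ^ 3 / 3 := by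
  have hcos : 0 < Real.cos z := by
    apply Real.cos_pos_of_mem_Ioo
    constructor
    · linarith [Real.pi_gt_three]
    · linarith [Real.pi_gt_three]
  have hsl := sin_le_taylor h0
  have hsg := sin_ge_taylor h0
  have hcl := cos_le_taylor h0
  have hcg := cos_ge_taylor h0
  rw [Real.tan_eq_sin_div_cos]
  constructor
  · rw [le_div_iff₀ hcos]
    calc (z + z ^ 3 / 3) * Real.cos z ≤ (z + z ^ 3 / 3) * (1 - z ^ 2 / 2 + z ^ 4 / 24) := by
          apply mul_le_mul_of_nonneg_left hcl
          positivity
      _ ≤ z - z ^ 3 / 6 := by nlinarith [pow_nonneg h0 5, pow_nonneg h0 7, pow_le_one₀ h0 h1 (n := 2)]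
      _ ≤ Real.sin z := hsg
  · rw [div_le_iff₀ hcos]
    calc Real.sin z ≤ z - z ^ 3 / 6 + z ^ 5 / 120 := hsl
      _ ≤ (z + 2 * z ^ 3 / 3) * (1 - z ^ 2 / 2 + z ^ 4 / 24 - z ^ 6 / 720) := by
          nlinarith [pow_nonneg h0 3, pow_nonneg h0 5, pow_nonneg h0 7, pow_nonneg h0 9,
            pow_le_one₀ h0 h1 (n := 2), pow_le_one₀ h0 h1 (n := 4), pow_le_one₀ h0 h1 (n := 6),
            mul_nonneg (pow_nonneg h0 3) (sub_nonneg.2 (pow_le_one₀ h0 h1 (n := 2)))]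
      _ ≤ (z + 2 * z ^ 3 / 3) * Real.cos z := by
          apply mul_le_mul_of_nonneg_left hcg
          positivity
end

section
/- Let a > 0 and 0 < h < π/(2a). Then the equation tan(hq) = 2aq/(q² − a²) has a solution q in the open interval (0, π/(2h)). -/
theorem exists_first_solution (a h : ℝ) (ha : 0 < a) (hh : 0 < h)
    (hha : h < Real.pi / (2 * a)) :
    ∃ q ∈ Set.Ioo (0 : ℝ) (Real.pi / (2 * h)),
      q ≠ a ∧ Real.tan (h * q) = 2 * a * q / (q ^ 2 - a ^ 2) := by
  set b := Real.pi / (2 * h) with hb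
  have hab : a < b := by
    rw [hb, lt_div_iff₀ (by positivity)]
    rw [lt_div_iff₀ (by positivity)] at hha
    nlinarith
  have hha2 : h * a < Real.pi / 2 := by
    rw [lt_div_iff₀ (by norm_num : (0:ℝ) < 2)]
    rw [lt_div_iff₀ (by positivity)] at hha
    nlinarith
  have hhb : h * b = Real.pi / 2 := by
    field_simp [hb]
    rw [hb]; field_simp
  set g : ℝ → ℝ := fun q => Real.sin (h * q) * (q ^ 2 - a ^ 2) - 2 * a * q * Real.cos (h * q)
    with hg
  have hcont : ContinuousOn g (Set.Icc a b) := by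
    apply Continuous.continuousOn
    fun_prop
  have hga : g a < 0 := by
    have hcos : 0 < Real.cos (h * a) :=
      Real.cos_pos_of_mem_Ioo ⟨by nlinarith [Real.pi_pos], hha2⟩
    have : g a = -(2 * a * a * Real.cos (h * a)) := by simp only [hg]; ring
    rw [this]
    nlinarith [mul_pos (mul_pos ha ha) hcos]
  have hgb : 0 < g b := by
    simp only [hg, hhb, Real.sin_pi_div_two, Real.cos_pi_div_two]
    nlinarith
  obtain ⟨q, hq, hgq⟩ := intermediate_value_Ioo (le_of_lt hab) hcont
    (Set.mem_Ioo.mpr ⟨hga, hgb⟩)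
  have hq1 : a < q := hq.1
  have hq2 : q < b := hq.2
  have hcos : 0 < Real.cos (h * q) := by
    apply Real.cos_pos_of_mem_Ioo
    constructor
    · nlinarith [Real.pi_pos]
    · rw [← hhb]; nlinarith
  have hqa : q ^ 2 - a ^ 2 ≠ 0 := by nlinarith
  refine ⟨q, ⟨by linarith, hq2⟩, by linarith, ?_⟩
  rw [Real.tan_eq_sin_div_cos]
  have : g q = 0 := hgq
  simp only [hg] at this
  field_simp
  nlinarith [this]
end

section
/- Let a > 0 and 0 < h < π/(2a). For every integer m ≥ 2, the equation tan(hq) = 2aq/(q² − a²) has a solution q in the open interval ((m−1)π/h, (m−1)π/h + π/(2h)). -/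
set_option maxHeartbeats 1000000 in
theorem exists_mth_solution (a h : ℝ) (ha : 0 < a) (hh : 0 < h)
    (hha : h < Real.pi / (2 * a)) :
    ∀ m : ℕ, 2 ≤ m →
      ∃ q ∈ Set.Ioo (((m : ℝ) - 1) * Real.pi / h)
          (((m : ℝ) - 1) * Real.pi / h + Real.pi / (2 * h)),
        q ≠ a ∧ Real.tan (h * q) = 2 * a * q / (q ^ 2 - a ^ 2) := by
  intro m hm
  have hπ := Real.pi_pos
  have hm1 : (1 : ℝ) ≤ (m : ℝ) - 1 := by
    have : (2 : ℝ) ≤ (m : ℝ) := by exact_mod_cast hm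
    linarith
  set L : ℝ := ((m : ℝ) - 1) * Real.pi / h with hLdef
  set R : ℝ := L + Real.pi / (2 * h) with hRdef
  clear_value R
  have h2a : 2 * a < Real.pi / h := by
    rw [lt_div_iff₀ hh]
    have := (lt_div_iff₀ (by positivity : (0:ℝ) < 2 * a)).mp hha
    nlinarith
  have hLa : a < L := by
    have hπh : Real.pi / h ≤ L := by
      rw [hLdef, div_le_div_iff₀ hh hh]
      nlinarith [mul_pos hπ hh]
    linarith
  have hL0 : 0 < L := lt_trans ha hLa
  have hLR : L < R := by
    rw [hRdef]
    have : 0 < Real.pi / (2 * h) := by positivity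
    linarith
  have hR0 : 0 < R := lt_trans hL0 hLR
  have hLsq : 0 < L ^ 2 - a ^ 2 := by nlinarith
  clear_value L
  set M : ℝ := 2 * a * R / (L ^ 2 - a ^ 2) with hMdef
  clear_value M
  have hM0 : 0 < M := by rw [hMdef]; positivity
  set t : ℝ := Real.arctan M with htdef
  clear_value t
  have ht0 : 0 < t := by
    rw [htdef, ← Real.arctan_zero]
    exact Real.arctan_strictMono hM0
  have htlt : t < Real.pi / 2 := htdef ▸ Real.arctan_lt_pi_div_two M
  set c : ℝ := (((m : ℝ) - 1) * Real.pi + t) / h with hcdef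
  clear_value c
  have hhc : h * c = ((m : ℝ) - 1) * Real.pi + t := by
    rw [hcdef]; field_simp
  have hhL : h * L = ((m : ℝ) - 1) * Real.pi := by
    rw [hLdef]; field_simp
  have hcL : L < c := by
    rw [hLdef, hcdef, div_lt_div_iff₀ hh hh]
    nlinarith
  have hcR : c < R := by
    have h1 : c = L + t / h := by rw [hcdef, hLdef]; ring
    have h2 : t / h < Real.pi / (2 * h) := by
      rw [div_lt_div_iff₀ hh (by positivity)]
      nlinarith
    rw [hRdef, h1]; linarith
  -- tan values
  have htanL : Real.tan (h * L) = 0 := by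
    rw [hhL]
    have : ((m : ℝ) - 1) = ((m - 1 : ℕ) : ℝ) := by
      have : 1 ≤ m := by omega
      push_cast [this]; ring
    rw [this]
    exact Real.tan_nat_mul_pi _
  have htanC : Real.tan (h * c) = M := by
    rw [hhc]
    have : ((m : ℝ) - 1) = ((m - 1 : ℕ) : ℝ) := by
      have : 1 ≤ m := by omega
      push_cast [this]; ring
    rw [this, add_comm, Function.Periodic.nat_mul Real.tan_periodic (m-1) t]
    rw [htdef]; exact Real.tan_arctan M
  -- cos ≠ 0 on [L, c]
  have hcos : ∀ q ∈ Set.Icc L c, Real.cos (h * q) ≠ 0 := by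
    intro q hq hcs
    rw [Real.cos_eq_zero_iff] at hcs
    obtain ⟨k, hk⟩ := hcs
    have h1 : ((m : ℝ) - 1) * Real.pi ≤ h * q := by
      rw [← hhL]; exact mul_le_mul_of_nonneg_left hq.1 hh.le
    have h2 : h * q ≤ ((m : ℝ) - 1) * Real.pi + t := by
      rw [← hhc]; exact mul_le_mul_of_nonneg_left hq.2 hh.le
    rw [hk] at h1 h2
    have hlow : 2 * ((m : ℝ) - 1) ≤ 2 * (k : ℝ) + 1 := by
      have h1' : 2 * ((m : ℝ) - 1) * Real.pi ≤ (2 * (k : ℝ) + 1) * Real.pi := by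
        linarith
      exact le_of_mul_le_mul_right h1' hπ
    have hhigh : 2 * (k : ℝ) + 1 < 2 * ((m : ℝ) - 1) + 1 := by
      have h2' : (2 * (k : ℝ) + 1) * Real.pi < (2 * ((m : ℝ) - 1) + 1) * Real.pi := by
        linarith
      exact lt_of_mul_lt_mul_right h2' hπ.le
    have hk1 : 2 * ((m : ℤ) - 1) ≤ 2 * k + 1 := by exact_mod_cast hlow
    have hk2 : 2 * k + 1 < 2 * ((m : ℤ) - 1) + 1 := by exact_mod_cast hhigh
    omega
  -- IVT
  set g : ℝ → ℝ := fun q => Real.tan (h * q) * (q ^ 2 - a ^ 2) - 2 * a * q with hgdef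
  clear_value g
  have hgcont : ContinuousOn g (Set.Icc L c) := by
    rw [hgdef]
    apply ContinuousOn.sub
    · apply ContinuousOn.mul
      · intro q hq
        apply ContinuousAt.continuousWithinAt
        exact (Real.continuousAt_tan.mpr (hcos q hq)).comp (continuousAt_const.mul continuousAt_id)
      · fun_prop
    · fun_prop
  have hgL : g L < 0 := by
    simp only [hgdef, htanL]
    nlinarith
  have hca : a < c := lt_trans hLa hcL
  have hgc : 0 < g c := by
    have hcsq : L ^ 2 - a ^ 2 ≤ c ^ 2 - a ^ 2 := by nlinarith
    have key : 2 * a * R ≤ M * (c ^ 2 - a ^ 2) := by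
      rw [hMdef, div_mul_eq_mul_div, le_div_iff₀ hLsq]
      exact mul_le_mul_of_nonneg_left hcsq (by positivity)
    simp only [hgdef, htanC]
    nlinarith
  obtain ⟨q, hq, hgq⟩ := intermediate_value_Icc hcL.le hgcont ⟨hgL.le, hgc.le⟩
  have hqL : L < q := by
    rcases eq_or_lt_of_le hq.1 with heq | h'
    · exfalso; rw [← heq] at hgq; linarith
    · exact h'
  have hqa : a < q := lt_trans hLa hqL
  have hqsq : q ^ 2 - a ^ 2 ≠ 0 := by nlinarith
  refine ⟨q, ⟨hqL, lt_of_le_of_lt hq.2 hcR⟩, ne_of_gt hqa, ?_⟩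
  have : Real.tan (h * q) * (q ^ 2 - a ^ 2) = 2 * a * q := by
    have := hgq; simp only [hgdef] at this; linarith
  rw [eq_div_iff hqsq]
  linarith [this]
end

section
/- Let a > 0, h > 0 with ha ≤ 1, and let α₁ be the smallest positive solution of tan(hq) = 2aq/(q² − a²). Then α₁ ≤ √(a² + 2a/h) ≤ √(3a)/√h. -/
open Real

lemma arctan_le_self' {x : ℝ} (hx : 0 ≤ x) : Real.arctan x ≤ x := by
  rcases eq_or_lt_of_le hx with rfl | hx'
  · simp
  · have h1 : 0 < Real.arctan x := by
      have := Real.arctan_strictMono hx'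
      rwa [Real.arctan_zero] at this
    have h2 : Real.arctan x < π / 2 := Real.arctan_lt_pi_div_two x
    have h3 := Real.lt_tan h1 h2
    rw [Real.tan_arctan] at h3
    exact h3.le

theorem alpha_one_upper_bound (a h α₁ : ℝ) (ha : 0 < a) (hh : 0 < h)
    (hha : h * a ≤ 1)
    (hmin : IsLeast {q : ℝ | 0 < q ∧ q ≠ a ∧
      Real.tan (h * q) = 2 * a * q / (q ^ 2 - a ^ 2)} α₁) :
    α₁ ≤ Real.sqrt (a ^ 2 + 2 * a / h) ∧
      Real.sqrt (a ^ 2 + 2 * a / h) ≤ Real.sqrt (3 * a) / Real.sqrt h := by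
  set s := Real.sqrt (a ^ 2 + 2 * a / h) with hs_def
  have harg : (0:ℝ) ≤ a ^ 2 + 2 * a / h := by positivity
  have hs2 : s ^ 2 = a ^ 2 + 2 * a / h := Real.sq_sqrt harg
  have has : a < s := by
    rw [hs_def, Real.lt_sqrt ha.le]
    have : 0 < 2 * a / h := by positivity
    linarith
  have hs_pos : 0 < s := lt_trans ha has
  -- the auxiliary function
  set g : ℝ → ℝ := fun q => h * q - 2 * Real.arctan (a / q) with hg_def
  have hga : g a < 0 := by
    have : a / a = 1 := div_self ha.ne'
    simp only [hg_def, this, Real.arctan_one]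
    have := Real.pi_gt_three
    nlinarith
  have hgs : 0 ≤ g s := by
    have h1 : Real.arctan (a / s) ≤ a / s := arctan_le_self' (by positivity)
    have key : 2 * a ≤ h * s ^ 2 := by
      rw [hs2]
      have : h * (a ^ 2 + 2 * a / h) = h * a ^ 2 + 2 * a := by field_simp
      nlinarith
    have h2 : 2 * a / s ≤ h * s := by
      rw [div_le_iff₀ hs_pos]
      nlinarith
    have h4 : 2 * (a / s) = 2 * a / s := by ring
    simp only [hg_def]
    linarith
  have hcont : ContinuousOn g (Set.Icc a s) := by
    apply ContinuousOn.sub (by fun_prop)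
    apply ContinuousOn.mul continuousOn_const
    apply Real.continuous_arctan.comp_continuousOn
    apply ContinuousOn.div continuousOn_const continuousOn_id
    intro x hx
    exact ne_of_gt (lt_of_lt_of_le ha hx.1)
  have hmem : (0:ℝ) ∈ Set.Icc (g a) (g s) := ⟨hga.le, hgs⟩
  obtain ⟨q₀, hq₀I, hq₀⟩ := intermediate_value_Icc has.le hcont hmem
  have hq₀a : a < q₀ := by
    rcases eq_or_lt_of_le hq₀I.1 with rfl | h'
    · exact absurd hq₀.symm (ne_of_gt hga)
    · exact h'
  have hq₀pos : 0 < q₀ := lt_trans ha hq₀a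
  -- q₀ solves the equation
  have heq : h * q₀ = 2 * Real.arctan (a / q₀) := by
    have : h * q₀ - 2 * Real.arctan (a / q₀) = 0 := hq₀
    linarith
  have htan : Real.tan (h * q₀) = 2 * a * q₀ / (q₀ ^ 2 - a ^ 2) := by
    rw [heq, Real.tan_two_mul, Real.tan_arctan]
    have h1 : q₀ ≠ 0 := hq₀pos.ne'
    have h2 : q₀ ^ 2 - a ^ 2 ≠ 0 := by nlinarith
    field_simp
  have hq₀mem : q₀ ∈ {q : ℝ | 0 < q ∧ q ≠ a ∧
      Real.tan (h * q) = 2 * a * q / (q ^ 2 - a ^ 2)} := ⟨hq₀pos, hq₀a.ne', htan⟩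
  constructor
  · exact le_trans (hmin.2 hq₀mem) hq₀I.2
  · have h3 : Real.sqrt (3 * a) / Real.sqrt h = Real.sqrt (3 * a / h) :=
      (Real.sqrt_div (by positivity) h).symm
    rw [h3]
    apply Real.sqrt_le_sqrt
    have ha2 : a ^ 2 ≤ a / h := by
      rw [le_div_iff₀ hh]
      nlinarith
    have : 3 * a / h = a / h + 2 * a / h := by ring
    linarith [this ▸ le_refl (3 * a / h)]
end

section
/- Let a > 0, h > 0 with ha ≤ 1/3, and let α₁ be the smallest positive solution of tan(hq) = 2aq/(q² − a²). Then α₁ ≥ √(a² + 2a/(h + 2ah²)). -/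
set_option maxHeartbeats 1600000 in
theorem alpha_one_lower_bound (a h α₁ : ℝ) (ha : 0 < a) (hh : 0 < h)
    (hha : h * a ≤ 1 / 3)
    (hmin : IsLeast {q : ℝ | 0 < q ∧ q ≠ a ∧
      Real.tan (h * q) = 2 * a * q / (q ^ 2 - a ^ 2)} α₁) :
    Real.sqrt (a ^ 2 + 2 * a / (h + 2 * a * h ^ 2)) ≤ α₁ := by
  by_contra hcon
  push_neg at hcon
  obtain ⟨⟨hq0, hne, heq⟩, -⟩ := hmin
  have hD : 0 < h + 2 * a * h ^ 2 := by positivity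
  have hq2 : α₁ ^ 2 < a ^ 2 + 2 * a / (h + 2 * a * h ^ 2) :=
    (Real.lt_sqrt hq0.le).mp hcon
  -- clear the denominator
  have h3 : (α₁ ^ 2 - a ^ 2) * (h + 2 * a * h ^ 2) < 2 * a := by
    rw [← lt_div_iff₀ hD]; linarith [hq2]
  have h3h := mul_lt_mul_of_pos_right h3 hh
  -- h * α₁ < 1
  have hx1 : h * α₁ < 1 := by
    nlinarith [h3h, sq_nonneg (h * α₁ - 1), mul_pos hh ha, mul_pos hh hq0,
      mul_pos (mul_pos hh ha) (mul_pos hh ha), sq_nonneg (h * a)]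
  have hxpos : 0 < h * α₁ := mul_pos hh hq0
  rcases lt_trichotomy α₁ a with hlt | hEq | hgt
  · -- α₁ < a : tan positive but RHS negative
    have hlt2 : h * α₁ < Real.pi / 2 := by
      nlinarith [Real.pi_gt_three]
    have htanpos : 0 < Real.tan (h * α₁) :=
      Real.tan_pos_of_pos_of_lt_pi_div_two hxpos hlt2
    have hrhs : 2 * a * α₁ / (α₁ ^ 2 - a ^ 2) < 0 := by
      apply div_neg_of_pos_of_neg (by positivity)
      nlinarith
    rw [heq] at htanpos; linarith
  · exact hne hEq
  · -- a < α₁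
    set x := h * α₁ with hxdef
    have hcosge : 1 - x ^ 2 / 2 ≤ Real.cos x := Real.one_sub_sq_div_two_le_cos
    have hc : 0 < 1 - x ^ 2 / 2 := by nlinarith
    have hcospos : 0 < Real.cos x := lt_of_lt_of_le hc hcosge
    have hsin : Real.sin x < x := Real.sin_lt hxpos
    have htanlt : Real.tan x < x / (1 - x ^ 2 / 2) := by
      rw [Real.tan_eq_sin_div_cos, div_lt_div_iff₀ hcospos hc]
      have h1 : Real.sin x * (1 - x ^ 2 / 2) < x * (1 - x ^ 2 / 2) :=
        mul_lt_mul_of_pos_right hsin hc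
      have h2 : x * (1 - x ^ 2 / 2) ≤ x * Real.cos x :=
        mul_le_mul_of_nonneg_left hcosge hxpos.le
      linarith
    have hden2 : 0 < α₁ ^ 2 - a ^ 2 := by nlinarith
    have hM : 0 < h + a * h ^ 2 := by positivity
    have h6 : 0 ≤ 2 - h * a - 2 * (h * a) ^ 2 := by nlinarith
    have P1 : α₁ ^ 2 * (h + a * h ^ 2) <
        (a ^ 2 + 2 * a / (h + 2 * a * h ^ 2)) * (h + a * h ^ 2) :=
      mul_lt_mul_of_pos_right hq2 hM
    have P2 : (a ^ 2 + 2 * a / (h + 2 * a * h ^ 2)) * (h + a * h ^ 2)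
        ≤ 2 * a + h * a ^ 2 := by
      rw [← sub_nonneg]
      have hid : 2 * a + h * a ^ 2 -
          (a ^ 2 + 2 * a / (h + 2 * a * h ^ 2)) * (h + a * h ^ 2)
          = a ^ 2 * h ^ 2 * (2 - h * a - 2 * (h * a) ^ 2) / (h + 2 * a * h ^ 2) := by
        field_simp
        ring
      rw [hid]
      apply div_nonneg _ hD.le
      exact mul_nonneg (by positivity) h6
    have P0 : α₁ ^ 2 * (h + a * h ^ 2) < 2 * a + h * a ^ 2 := P1.trans_le P2
    have P : h * (α₁ ^ 2 - a ^ 2) + a * h ^ 2 * α₁ ^ 2 < 2 * a := by nlinarith [P0]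
    have hkey : x * (α₁ ^ 2 - a ^ 2) < 2 * a * α₁ * (1 - x ^ 2 / 2) := by
      rw [hxdef]
      nlinarith [mul_lt_mul_of_pos_left P hq0]
    have hfinal : x / (1 - x ^ 2 / 2) < 2 * a * α₁ / (α₁ ^ 2 - a ^ 2) := by
      rw [div_lt_div_iff₀ hc hden2]
      linarith [hkey]
    rw [heq] at htanlt
    linarith
end

section
/- Let a > 0 and for each h ∈ (0, 1/(3a)) let α₁(h) be the smallest positive solution of tan(hq) = 2aq/(q² − a²). Then α₁(h)/√(2a/h) → 1 as h → 0⁺. -/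
open Real Set
set_option maxHeartbeats 4000000

lemma alpha_bounds (a ε h : ℝ) (ha : 0 < a) (hε0 : 0 < ε) (hε1 : ε ≤ 1/2)
    (hh0 : 0 < h) (hh1 : h < 1/(3*a)) (hah : a*h < ε*(2-ε)/2) (hah8 : a*h ≤ 1/8)
    (α : ℝ)
    (hα : IsLeast {q : ℝ | 0 < q ∧ q ≠ a ∧
      Real.tan (h*q) = 2*a*q/(q^2-a^2)} α) :
    (1-ε) * Real.sqrt (2*a/h) < α ∧ α ≤ (1+ε) * Real.sqrt (2*a/h) := by
  have hpi : (3:ℝ) < π := Real.pi_gt_three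
  set r := Real.sqrt (2*a/h) with hrdef
  have hr2 : r^2 = 2*a/h := Real.sq_sqrt (by positivity)
  have hr0 : 0 < r := Real.sqrt_pos.2 (by positivity)
  have hhr2 : (h*r)^2 = 2*a*h := by
    have : (h*r)^2 = h^2 * r^2 := by ring
    rw [this, hr2]; field_simp
  have hhr : h*r ≤ 1/2 := by nlinarith [mul_pos hh0 hr0]
  have h2ah : 6*a^2 < 2*a/h := by
    rw [lt_div_iff₀ hh0]
    have h3ah : 3*a*h < 1 := by
      have := (lt_div_iff₀ (by positivity : (0:ℝ) < 3*a)).1 hh1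
      nlinarith
    nlinarith
  constructor
  · -- lower bound : no root ≤ (1-ε) r
    by_contra hcon
    push_neg at hcon
    obtain ⟨⟨hα0, hαa, hαeq⟩, -⟩ := hα
    rcases lt_trichotomy α a with hlt | heq | hgt
    · -- α < a : tan positive, RHS negative
      have hx1 : h*α < 1/3 := by
        have h1 : h*α < h*a := by nlinarith
        have h2 : h*a < 1/3 := by
          have := (lt_div_iff₀ (by positivity : (0:ℝ) < 3*a)).1 hh1
          nlinarith
        linarith
      have htanpos : 0 < Real.tan (h*α) :=
        Real.tan_pos_of_pos_of_lt_pi_div_two (by positivity) (by linarith)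
      have hrhsneg : 2*a*α/(α^2-a^2) < 0 := by
        apply div_neg_of_pos_of_neg (by positivity)
        nlinarith
      rw [hαeq] at htanpos
      linarith
    · exact hαa heq
    · -- a < α ≤ (1-ε) r
      set x := h*α with hxdef
      have hx0 : 0 < x := by positivity
      have hxle : x ≤ h*r := by
        have h1 : x ≤ h*((1-ε)*r) := mul_le_mul_of_nonneg_left hcon hh0.le
        nlinarith [mul_pos hh0 hr0]
      have hxhalf : x ≤ 1/2 := le_trans hxle hhr
      have hcospos : 0 < Real.cos x := by
        have := Real.one_sub_sq_div_two_le_cos (x := x)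
        nlinarith
      have hcosge : 1 - x^2/2 ≤ Real.cos x := Real.one_sub_sq_div_two_le_cos
      have hsin : Real.sin x < x := Real.sin_lt hx0
      have hαsq : α^2 - a^2 > 0 := by nlinarith
      have heqmul : Real.tan x * (α^2 - a^2) = 2*a*α := by
        rw [hxdef, hαeq]
        field_simp
      -- key numeric facts
      have hhα2 : h * α^2 ≤ (1-ε)^2 * (2*a) := by
        have h2 : h * r^2 = 2*a := by rw [hr2]; field_simp
        have h3 : α*α ≤ ((1-ε)*r)*((1-ε)*r) :=
          mul_le_mul hcon hcon hα0.le (hα0.le.trans hcon)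
        nlinarith
      have hx2 : x^2 ≤ 2*a*h := by
        have h3 : x*x ≤ (h*r)*(h*r) :=
          mul_le_mul hxle hxle hx0.le (hx0.le.trans hxle)
        nlinarith
      -- 2aα(1 - x²/2) > x(α² - a²)
      have hkey : x * (α^2 - a^2) < 2*a*α*(1 - x^2/2) := by
        have h1 : x * (α^2 - a^2) < x * α^2 := by
          nlinarith [mul_pos hx0 (mul_pos ha ha)]
        have h2 : x * α^2 ≤ (1-ε)^2*(2*a)*α := by
          have h2' := mul_le_mul_of_nonneg_right hhα2 hα0.le
          have h2'' : x * α^2 = h * α^2 * α := by rw [hxdef]; ring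
          linarith
        have hpos : 0 < 1 - a*h - (1-ε)^2 := by nlinarith
        have h3 : (1-ε)^2*(2*a)*α < 2*a*α*(1 - a*h) := by
          nlinarith [mul_pos (mul_pos ha hα0) hpos]
        have h4 : 2*a*α*(1 - a*h) ≤ 2*a*α*(1 - x^2/2) := by
          nlinarith [mul_nonneg (mul_nonneg ha.le hα0.le)
            (by linarith : (0:ℝ) ≤ 2*a*h - x^2)]
        linarith
      have hmc : Real.tan x * Real.cos x = Real.sin x := Real.tan_mul_cos hcospos.ne'
      have h5 : 2*a*α * Real.cos x = Real.sin x * (α^2 - a^2) := by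
        linear_combination (α^2 - a^2) * hmc - Real.cos x * heqmul
      nlinarith [mul_lt_mul_of_pos_right hsin hαsq,
        mul_le_mul_of_nonneg_left hcosge (by positivity : (0:ℝ) ≤ 2*a*α)]
  · -- upper bound via IVT
    set q := (1+ε)*r with hqdef
    have hq0 : 0 < q := by positivity
    have hq2r : q^2 = (1+ε)^2 * (2*a/h) := by rw [hqdef, mul_pow, hr2]
    have hqh : h * q^2 = (1+ε)^2 * (2*a) := by
      rw [hq2r]; field_simp
    have haq : a < q := by
      have h1 : a^2 < q^2 := by
        have h2 : (2:ℝ)*a/h ≤ q^2 := by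
          nlinarith [div_pos (by positivity : (0:ℝ) < 2*a) hh0,
            mul_pos hε0 (div_pos (by positivity : (0:ℝ) < 2*a) hh0),
            mul_nonneg (sq_nonneg ε) (div_pos (by positivity : (0:ℝ) < 2*a) hh0).le]
        nlinarith
      nlinarith
    have hhqr : h*q = (1+ε)*(h*r) := by rw [hqdef]; ring
    have hhq : h*q ≤ 3/4 := by nlinarith [mul_pos hh0 hr0]
    have hcosq : ∀ y ∈ Icc a q, Real.cos (h*y) ≠ 0 := by
      intro y hy
      have hy0 : 0 < y := lt_of_lt_of_le ha hy.1
      have : h*y ≤ h*q := mul_le_mul_of_nonneg_left hy.2 hh0.le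
      have h2 : 0 < Real.cos (h*y) := Real.cos_pos_of_mem_Ioo
        ⟨by nlinarith [Real.pi_gt_three], by nlinarith [Real.pi_gt_three]⟩
      exact h2.ne'
    set F : ℝ → ℝ := fun y => Real.tan (h*y) * (y^2 - a^2) - 2*a*y with hFdef
    have hFcont : ContinuousOn F (Icc a q) := by
      apply ContinuousOn.sub
      · apply ContinuousOn.mul
        · exact Real.continuousOn_tan.comp
            ((continuous_const.mul continuous_id).continuousOn)
            (fun y hy => hcosq y hy)
        · fun_prop
      · fun_prop
    have hFa : F a = -(2*a*a) := by
      show Real.tan (h*a) * (a^2 - a^2) - 2*a*a = -(2*a*a)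
      ring
    have hFq : 0 ≤ F q := by
      have htangt : h*q < Real.tan (h*q) :=
        Real.lt_tan (mul_pos hh0 hq0) (by linarith)
      have hqa2 : 0 < q^2 - a^2 := by nlinarith
      have hmono : h*q*(q^2 - a^2) ≤ Real.tan (h*q) * (q^2-a^2) :=
        mul_le_mul_of_nonneg_right htangt.le hqa2.le
      have hfac : (0:ℝ) < h*q^2 - h*a^2 - 2*a := by
        nlinarith [hqh, mul_lt_mul_of_pos_left hah ha, mul_pos ha hε0,
          mul_nonneg ha.le (sq_nonneg ε)]
      have hnum : 2*a*q ≤ h*q*(q^2-a^2) := by nlinarith [mul_pos hq0 hfac]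
      simp only [hFdef]
      linarith [hmono]
    have h0mem : (0:ℝ) ∈ Icc (F a) (F q) := ⟨by rw [hFa]; nlinarith, hFq⟩
    obtain ⟨c, hcmem, hFc⟩ := intermediate_value_Icc haq.le hFcont h0mem
    have hca : a < c := by
      rcases eq_or_lt_of_le hcmem.1 with h1 | h1
      · exfalso; rw [← h1, hFa] at hFc; nlinarith
      · exact h1
    have hcS : c ∈ {q : ℝ | 0 < q ∧ q ≠ a ∧
        Real.tan (h*q) = 2*a*q/(q^2-a^2)} := by
      refine ⟨lt_trans ha hca, (ne_of_gt hca), ?_⟩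
      have hc2 : c^2 - a^2 > 0 := by nlinarith
      rw [eq_div_iff hc2.ne']
      simp only [hFdef] at hFc
      linarith
    exact le_trans (hα.2 hcS) hcmem.2

theorem alpha_one_asymptotic (a : ℝ) (ha : 0 < a) (α₁ : ℝ → ℝ)
    (hmin : ∀ h ∈ Set.Ioo (0 : ℝ) (1 / (3 * a)),
      IsLeast {q : ℝ | 0 < q ∧ q ≠ a ∧
        Real.tan (h * q) = 2 * a * q / (q ^ 2 - a ^ 2)} (α₁ h)) :
    Filter.Tendsto (fun h : ℝ => α₁ h / Real.sqrt (2 * a / h))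
      (nhdsWithin 0 (Set.Ioi 0)) (nhds 1) := by
  rw [Metric.tendsto_nhdsWithin_nhds]
  intro ε hε
  set ε' := min (ε/2) (1/2) with hε'def
  have hε'0 : 0 < ε' := lt_min (by linarith) (by norm_num)
  have hε'1 : ε' ≤ 1/2 := min_le_right _ _
  have hε'ε : ε' < ε := lt_of_le_of_lt (min_le_left _ _) (by linarith)
  refine ⟨min (1/(3*a)) (min (ε'*(2-ε')/(4*a)) (1/(8*a))), ?_, ?_⟩
  · apply lt_min (by positivity)
    apply lt_min _ (by positivity)
    apply div_pos (by nlinarith) (by positivity)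
  · intro h hmem hdist
    have hh0 : 0 < h := hmem
    rw [Real.dist_eq, sub_zero, abs_of_pos hh0] at hdist
    have hh1 : h < 1/(3*a) := lt_of_lt_of_le hdist (min_le_left _ _)
    have hah : a*h < ε'*(2-ε')/2 := by
      have h2 := lt_of_lt_of_le hdist ((min_le_right _ _).trans (min_le_left _ _))
      rw [lt_div_iff₀ (by positivity : (0:ℝ) < 4*a)] at h2
      nlinarith
    have hah8 : a*h ≤ 1/8 := by
      have h2 := lt_of_lt_of_le hdist ((min_le_right _ _).trans (min_le_right _ _))
      rw [lt_div_iff₀ (by positivity : (0:ℝ) < 8*a)] at h2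
      nlinarith
    obtain ⟨hlo, hhi⟩ := alpha_bounds a ε' h ha hε'0 hε'1 hh0 hh1 hah hah8
      (α₁ h) (hmin h ⟨hh0, hh1⟩)
    have hr0 : 0 < Real.sqrt (2*a/h) := Real.sqrt_pos.2 (by positivity)
    rw [Real.dist_eq, abs_lt]
    constructor
    · have h3 : (1-ε') < α₁ h / Real.sqrt (2*a/h) := by
        rw [lt_div_iff₀ hr0]; linarith
      linarith
    · have h3 : α₁ h / Real.sqrt (2*a/h) ≤ 1+ε' := by
        rw [div_le_iff₀ hr0]; linarith
      linarith
end

section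
/- Let a > 0, α > 0, z ≥ 0 with α²z² ≤ 3ha ≤ 1 and αz ≤ 1 for some h > 0. Then α(1 − 3ha/2) ≤ α cos(αz) + a sin(αz) ≤ α(1 + ha). -/
theorem cos_sin_combination_bounds (a h α z : ℝ) (ha : 0 < a) (hh : 0 < h)
    (hα : 0 < α) (hz : 0 ≤ z) (hzh : z ≤ h)
    (h1 : α ^ 2 * z ^ 2 ≤ 3 * h * a) (h2 : 3 * h * a ≤ 1) (h3 : α * z ≤ 1) :
    α * (1 - 3 * h * a / 2) ≤ α * Real.cos (α * z) + a * Real.sin (α * z) ∧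
      α * Real.cos (α * z) + a * Real.sin (α * z) ≤ α * (1 + h * a) := by
  have ht : 0 ≤ α * z := by positivity
  have hcosl : 1 - (α * z) ^ 2 / 2 ≤ Real.cos (α * z) :=
    Real.one_sub_sq_div_two_le_cos
  have hsinl : 0 ≤ Real.sin (α * z) :=
    Real.sin_nonneg_of_nonneg_of_le_pi ht (le_trans h3 (by linarith [Real.pi_gt_three]))
  have hcosu : Real.cos (α * z) ≤ 1 := Real.cos_le_one _
  have hsinu : Real.sin (α * z) ≤ α * z := Real.sin_le ht
  constructor
  · nlinarith [mul_pos hα ha, mul_nonneg (le_of_lt ha) hsinl]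
  · nlinarith [mul_le_mul_of_nonneg_left h3 ha.le, mul_le_mul_of_nonneg_left hzh ha.le]
end

section
/- Let a > 0, α > 0, h > 0, and z, w ∈ [0, h] with α²h² ≤ 3ha ≤ 1 and αh ≤ 1. Then α²(1 − 3ha/2)² ≤ [α cos(αz) + a sin(αz)]·[α cos(αw) + a sin(αw)] ≤ α²(1 + ha)². -/
lemma factor_bounds (a h α z : ℝ) (ha : 0 < a) (hh : 0 < h)
    (hα : 0 < α) (hz : z ∈ Set.Icc 0 h)
    (h1 : α ^ 2 * h ^ 2 ≤ 3 * h * a) (h2 : 3 * h * a ≤ 1) (h3 : α * h ≤ 1) :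
    α * (1 - 3 * h * a / 2) ≤ α * Real.cos (α * z) + a * Real.sin (α * z) ∧
    α * Real.cos (α * z) + a * Real.sin (α * z) ≤ α * (1 + h * a) := by
  obtain ⟨hz0, hzh⟩ := hz
  have hαz0 : 0 ≤ α * z := mul_nonneg hα.le hz0
  have hαzh : α * z ≤ α * h := by nlinarith
  have hαz1 : α * z ≤ 1 := hαzh.trans h3
  have hsin0 : 0 ≤ Real.sin (α * z) :=
    Real.sin_nonneg_of_nonneg_of_le_pi hαz0 (hαz1.trans (by linarith [Real.pi_gt_three]))
  have hsinle : Real.sin (α * z) ≤ α * z := Real.sin_le hαz0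
  have hcosle : Real.cos (α * z) ≤ 1 := Real.cos_le_one _
  have hcosge : 1 - (α * z) ^ 2 / 2 ≤ Real.cos (α * z) := by
    have := Real.one_sub_sq_div_two_le_cos (x := α * z)
    linarith
  constructor
  · have hsq : (α * z) ^ 2 ≤ α ^ 2 * h ^ 2 := by nlinarith
    nlinarith
  · nlinarith [mul_nonneg ha.le hsin0]

theorem cos_sin_product_bounds (a h α z w : ℝ) (ha : 0 < a) (hh : 0 < h)
    (hα : 0 < α) (hz : z ∈ Set.Icc 0 h) (hw : w ∈ Set.Icc 0 h)
    (h1 : α ^ 2 * h ^ 2 ≤ 3 * h * a) (h2 : 3 * h * a ≤ 1) (h3 : α * h ≤ 1) :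
    α ^ 2 * (1 - 3 * h * a / 2) ^ 2 ≤
      (α * Real.cos (α * z) + a * Real.sin (α * z)) *
        (α * Real.cos (α * w) + a * Real.sin (α * w)) ∧
    (α * Real.cos (α * z) + a * Real.sin (α * z)) *
        (α * Real.cos (α * w) + a * Real.sin (α * w)) ≤
      α ^ 2 * (1 + h * a) ^ 2 := by
  obtain ⟨hzl, hzu⟩ := factor_bounds a h α z ha hh hα hz h1 h2 h3
  obtain ⟨hwl, hwu⟩ := factor_bounds a h α w ha hh hα hw h1 h2 h3
  have hlo : 0 ≤ α * (1 - 3 * h * a / 2) := by nlinarith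
  constructor
  · nlinarith [mul_le_mul hzl hwl hlo (hlo.trans hzl) ]
    
  · nlinarith [mul_le_mul hzu hwu (hlo.trans hwl) (by nlinarith : (0:ℝ) ≤ α * (1 + h * a))]
end

section
/- Let a > 0, h > 0 with ah ≤ 1/3, and let α₁ be the smallest positive solution of tan(hq) = 2aq/(q² − a²). Then for all z, w ∈ [0, h] and all t ≥ s, the quantity P₁(z,t,w,s) := 2e^{−α₁²(t−s)}[α₁ cos(α₁z) + a sin(α₁z)][α₁ cos(α₁w) + a sin(α₁w)]/(2a + h(a² + α₁²)) satisfies |P₁(z,t,w,s) − (α₁²/(2a)) e^{−α₁²(t−s)}| ≤ (5/2) h α₁² e^{−α₁²(t−s)}. -/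
private lemma sin_le_self {x : ℝ} (hx : 0 ≤ x) : Real.sin x ≤ x := by
  rcases eq_or_lt_of_le hx with h | h
  · simp [← h]
  · exact (Real.sin_lt h).le

/-- Existence of a root of `tan (h q) * (q^2 - a^2) - 2 a q` in `(a, b]`. -/
private lemma root_exists (a h : ℝ) (ha : 0 < a) (hh : 0 < h) (hah : a * h ≤ 1 / 3) :
    ∃ q : ℝ, a < q ∧ h * q < 1 ∧ q ^ 2 ≤ a ^ 2 + 2 * a / h ∧
      Real.tan (h * q) = 2 * a * q / (q ^ 2 - a ^ 2) := by
  have hpi : (1 : ℝ) < Real.pi / 2 := by linarith [Real.pi_gt_three]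
  set b := Real.sqrt (a ^ 2 + 2 * a / h) with hbdef
  have hb2 : b ^ 2 = a ^ 2 + 2 * a / h := Real.sq_sqrt (by positivity)
  have hbpos : 0 < b := Real.sqrt_pos.2 (by positivity)
  have h2ah : 0 < 2 * a / h := by positivity
  have hab : a < b := by nlinarith [hb2]
  have hhb1 : h * b < 1 := by
    have hsq : (h * b) ^ 2 = a ^ 2 * h ^ 2 + 2 * (a * h) := by
      rw [mul_pow, hb2]; field_simp
    have hsq79 : (h * b) ^ 2 ≤ 7 / 9 := by
      rw [hsq]; nlinarith [mul_pos ha hh]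
    nlinarith [sq_nonneg (h * b - 1)]
  have hcos : ∀ q ∈ Set.Icc a b, 0 < Real.cos (h * q) := by
    intro q hq
    apply Real.cos_pos_of_mem_Ioo
    constructor
    · have : 0 < h * q := mul_pos hh (lt_of_lt_of_le ha hq.1)
      linarith [Real.pi_div_two_pos]
    · have : h * q ≤ h * b := by nlinarith [hq.2]
      linarith
  have hcont : ContinuousOn
      (fun q => Real.tan (h * q) * (q ^ 2 - a ^ 2) - 2 * a * q) (Set.Icc a b) := by
    apply ContinuousOn.sub
    · apply ContinuousOn.mul
      · intro q hq
        apply ContinuousAt.continuousWithinAt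
        exact (Real.continuousAt_tan.2 (ne_of_gt (hcos q hq))).comp
          ((continuous_const.mul continuous_id).continuousAt)
      · fun_prop
    · fun_prop
  have hfa : Real.tan (h * a) * (a ^ 2 - a ^ 2) - 2 * a * a = -(2 * a * a) := by ring_nf
  have hfb : 0 ≤ Real.tan (h * b) * (b ^ 2 - a ^ 2) - 2 * a * b := by
    have htan : h * b < Real.tan (h * b) := Real.lt_tan (mul_pos hh hbpos) (by linarith)
    have hb2a : b ^ 2 - a ^ 2 = 2 * a / h := by rw [hb2]; ring
    rw [hb2a]
    have : (h * b) * (2 * a / h) ≤ Real.tan (h * b) * (2 * a / h) :=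
      mul_le_mul_of_nonneg_right htan.le (by positivity)
    have heq : (h * b) * (2 * a / h) = 2 * a * b := by field_simp
    linarith [heq ▸ this]
  have hmem : (0 : ℝ) ∈ Set.Icc
      (Real.tan (h * a) * (a ^ 2 - a ^ 2) - 2 * a * a)
      (Real.tan (h * b) * (b ^ 2 - a ^ 2) - 2 * a * b) := by
    constructor
    · rw [hfa]; nlinarith
    · exact hfb
  obtain ⟨q, hqmem, hfq⟩ := intermediate_value_Icc hab.le hcont hmem
  replace hfq : Real.tan (h * q) * (q ^ 2 - a ^ 2) - 2 * a * q = 0 := hfq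
  have hqa : a < q := by
    rcases eq_or_lt_of_le hqmem.1 with h' | h'
    · exfalso
      rw [← h'] at hfq
      ring_nf at hfq
      nlinarith [hfq, sq_nonneg a]
    · exact h'
  refine ⟨q, hqa, ?_, ?_, ?_⟩
  · calc h * q ≤ h * b := by nlinarith [hqmem.2]
      _ < 1 := hhb1
  · calc q ^ 2 ≤ b ^ 2 := by nlinarith [hqmem.2]
      _ = a ^ 2 + 2 * a / h := hb2
  · have hden : q ^ 2 - a ^ 2 ≠ 0 := by nlinarith
    rw [eq_div_iff hden]
    linarith [hfq]

set_option maxHeartbeats 800000 in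
private lemma final_bound (a h α₁ Cz Cw : ℝ) (ha : 0 < a) (hh : 0 < h)
    (hah : a * h ≤ 1 / 3) (hα₁pos : 0 < α₁) (haα : a < α₁)
    (hUh : h * α₁ ^ 2 ≤ a ^ 2 * h + 2 * a)
    (hL : 2 * a ≤ h * (1 + 2 * (a * h)) * (α₁ ^ 2 - a ^ 2))
    (hCzlo : α₁ * (1 - 7 / 6 * (a * h)) ≤ Cz) (hCzhi : Cz ≤ α₁ * (1 + a * h))
    (hCwlo : α₁ * (1 - 7 / 6 * (a * h)) ≤ Cw) (hCwhi : Cw ≤ α₁ * (1 + a * h)) :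
    |2 * Cz * Cw / (2 * a + h * (a ^ 2 + α₁ ^ 2)) - α₁ ^ 2 / (2 * a)| ≤
      5 / 2 * h * α₁ ^ 2 := by
  have hDpos : 0 < 2 * a + h * (a ^ 2 + α₁ ^ 2) := by positivity
  have hD16 : 16 * a / 5 ≤ 2 * a + h * (a ^ 2 + α₁ ^ 2) := by
    have hX0 : (0:ℝ) ≤ h * (α₁ ^ 2 - a ^ 2) := by nlinarith
    have hprod : (0:ℝ) ≤ (1 / 3 - a * h) * (h * (α₁ ^ 2 - a ^ 2)) :=
      mul_nonneg (by linarith) hX0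
    nlinarith [hprod, mul_pos ha hh]
  have hkey1 : 2 * a - a ^ 2 * h - h * α₁ ^ 2 ≤ 2 * a ^ 2 * h := by
    have hu2a : h * α₁ ^ 2 - a ^ 2 * h ≤ 2 * a := by linarith
    nlinarith [mul_le_mul_of_nonneg_left hu2a (by positivity : (0:ℝ) ≤ 2 * (a * h))]
  have hClo_pos : 0 < α₁ * (1 - 7 / 6 * (a * h)) :=
    mul_pos hα₁pos (by linarith : (0:ℝ) < 1 - 7 / 6 * (a * h))
  have hCzpos : 0 < Cz := lt_of_lt_of_le hClo_pos hCzlo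
  have hCwpos : 0 < Cw := lt_of_lt_of_le hClo_pos hCwlo
  have hTeq : 2 * Cz * Cw / (2 * a + h * (a ^ 2 + α₁ ^ 2)) - α₁ ^ 2 / (2 * a) =
      (4 * a * (Cz * Cw) - α₁ ^ 2 * (2 * a + h * (a ^ 2 + α₁ ^ 2))) /
        (2 * a * (2 * a + h * (a ^ 2 + α₁ ^ 2))) := by
    field_simp
    ring
  rw [hTeq, abs_div, abs_of_pos (by positivity : (0:ℝ) < 2 * a * (2 * a + h * (a ^ 2 + α₁ ^ 2))),
    div_le_iff₀ (by positivity : (0:ℝ) < 2 * a * (2 * a + h * (a ^ 2 + α₁ ^ 2))), abs_le]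
  have hF1 : 4 * a * (Cz * Cw) ≤ 4 * a * ((α₁ * (1 + a * h)) * (α₁ * (1 + a * h))) :=
    mul_le_mul_of_nonneg_left
      (mul_le_mul hCzhi hCwhi hCwpos.le (by positivity)) (by positivity)
  have hG1 : 4 * a * ((α₁ * (1 - 7 / 6 * (a * h))) * (α₁ * (1 - 7 / 6 * (a * h)))) ≤
      4 * a * (Cz * Cw) :=
    mul_le_mul_of_nonneg_left
      (mul_le_mul hCzlo hCwlo hClo_pos.le hCzpos.le) (by positivity)
  have hF2 : α₁ ^ 2 * (2 * a - a ^ 2 * h - h * α₁ ^ 2) ≤ α₁ ^ 2 * (2 * a ^ 2 * h) :=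
    mul_le_mul_of_nonneg_left hkey1 (sq_nonneg α₁)
  have hF3 : 4 * (a ^ 2 * h * α₁ ^ 2) * (a * h) ≤ 4 * (a ^ 2 * h * α₁ ^ 2) * (1 / 3) :=
    mul_le_mul_of_nonneg_left hah (by positivity)
  have hF4 : 16 * (a ^ 2 * h * α₁ ^ 2) ≤
      5 * (a * h * α₁ ^ 2) * (2 * a + h * (a ^ 2 + α₁ ^ 2)) := by
    have h5 := mul_le_mul_of_nonneg_left hD16 (by positivity : (0:ℝ) ≤ 5 * (a * h * α₁ ^ 2))
    nlinarith [h5]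
  have hF5 : α₁ ^ 2 * (h * α₁ ^ 2) ≤ α₁ ^ 2 * (a ^ 2 * h + 2 * a) :=
    mul_le_mul_of_nonneg_left hUh (sq_nonneg α₁)
  have hF6 : (0:ℝ) ≤ a ^ 3 * h ^ 2 * α₁ ^ 2 := by positivity
  constructor
  · linarith [hG1, hF5, hF4, hF6]
  · linarith [hF1, hF2, hF3, hF4]

private lemma C_bound (a h α₁ u : ℝ) (ha : 0 < a) (hh : 0 < h)
    (hah : a * h ≤ 1 / 3) (hα₁pos : 0 < α₁) (hu0 : 0 ≤ u) (huh : u ≤ h)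
    (hx1 : h * α₁ < 1) (hxsq : (h * α₁) ^ 2 ≤ a ^ 2 * h ^ 2 + 2 * (a * h)) :
    α₁ * (1 - 7 / 6 * (a * h)) ≤ α₁ * Real.cos (α₁ * u) + a * Real.sin (α₁ * u) ∧
      α₁ * Real.cos (α₁ * u) + a * Real.sin (α₁ * u) ≤ α₁ * (1 + a * h) := by
  have hαu0 : 0 ≤ α₁ * u := by positivity
  have hαuh : α₁ * u ≤ h * α₁ := by nlinarith
  have hsinle : Real.sin (α₁ * u) ≤ α₁ * u := sin_le_self hαu0
  have hsin0 : 0 ≤ Real.sin (α₁ * u) :=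
    Real.sin_nonneg_of_nonneg_of_le_pi hαu0 (by nlinarith [Real.pi_gt_three])
  have hcosle : Real.cos (α₁ * u) ≤ 1 := Real.cos_le_one _
  have hcosge : 1 - (α₁ * u) ^ 2 / 2 ≤ Real.cos (α₁ * u) := Real.one_sub_sq_div_two_le_cos
  have hsq2 : (α₁ * u) ^ 2 ≤ (h * α₁) ^ 2 := by
    nlinarith [mul_le_mul hαuh hαuh hαu0 (by positivity : (0:ℝ) ≤ h * α₁)]
  have h1 : (α₁ * u) ^ 2 ≤ 7 / 3 * (a * h) := by
    nlinarith [hsq2, hxsq, mul_le_mul_of_nonneg_left hah (le_of_lt (mul_pos ha hh))]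
  have h2 : α₁ * (1 - (α₁ * u) ^ 2 / 2) ≤ α₁ * Real.cos (α₁ * u) :=
    mul_le_mul_of_nonneg_left hcosge hα₁pos.le
  have h3 : α₁ * (α₁ * u) ^ 2 ≤ α₁ * (7 / 3 * (a * h)) :=
    mul_le_mul_of_nonneg_left h1 hα₁pos.le
  constructor
  · nlinarith [h2, h3, mul_nonneg ha.le hsin0]
  · nlinarith [mul_le_mul_of_nonneg_left hcosle hα₁pos.le,
      mul_le_mul_of_nonneg_left hsinle ha.le, mul_le_mul_of_nonneg_left hαuh ha.le]

set_option maxHeartbeats 1000000 in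
theorem P1_approximation (a h α₁ : ℝ) (ha : 0 < a) (hh : 0 < h)
    (hah : a * h ≤ 1 / 3)
    (hmin : IsLeast {q : ℝ | 0 < q ∧ q ≠ a ∧
      Real.tan (h * q) = 2 * a * q / (q ^ 2 - a ^ 2)} α₁) :
    ∀ z ∈ Set.Icc (0 : ℝ) h, ∀ w ∈ Set.Icc (0 : ℝ) h, ∀ s t : ℝ, s ≤ t →
      |2 * Real.exp (-α₁ ^ 2 * (t - s)) *
          (α₁ * Real.cos (α₁ * z) + a * Real.sin (α₁ * z)) *
          (α₁ * Real.cos (α₁ * w) + a * Real.sin (α₁ * w)) /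
          (2 * a + h * (a ^ 2 + α₁ ^ 2)) -
        α₁ ^ 2 / (2 * a) * Real.exp (-α₁ ^ 2 * (t - s))| ≤
      5 / 2 * h * α₁ ^ 2 * Real.exp (-α₁ ^ 2 * (t - s)) := by
  obtain ⟨⟨hα₁pos, hα₁ne, heq⟩, hlb⟩ := hmin
  have hpi : (1 : ℝ) < Real.pi / 2 := by linarith [Real.pi_gt_three]
  -- α₁ > a
  have haα : a < α₁ := by
    rcases lt_trichotomy α₁ a with hlt | heqa | hgt
    · exfalso
      have h1 : 0 < h * α₁ := by positivity
      have h2 : h * α₁ < Real.pi / 2 := by nlinarith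
      have htanpos : 0 < Real.tan (h * α₁) := Real.tan_pos_of_pos_of_lt_pi_div_two h1 h2
      have hrhs : 2 * a * α₁ / (α₁ ^ 2 - a ^ 2) < 0 :=
        div_neg_of_pos_of_neg (by positivity) (by nlinarith)
      rw [heq] at htanpos; linarith
    · exact absurd heqa hα₁ne
    · exact hgt
  -- upper bound from the least root property
  obtain ⟨q, hqa, hhq1, hq2, hqeq⟩ := root_exists a h ha hh hah
  have hα₁q : α₁ ≤ q := hlb ⟨lt_trans ha hqa, ne_of_gt hqa, hqeq⟩
  have hU : α₁ ^ 2 ≤ a ^ 2 + 2 * a / h := by nlinarith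
  have hUh : h * α₁ ^ 2 ≤ a ^ 2 * h + 2 * a := by
    have h2 : h * (a ^ 2 + 2 * a / h) = a ^ 2 * h + 2 * a := by
      field_simp
    nlinarith
  have hx1 : h * α₁ < 1 := by nlinarith
  have hxpos : 0 < h * α₁ := by positivity
  -- cosine lower bound : cos(h α₁) * (1 + 2 a h) ≥ 1
  have hxsq : (h * α₁) ^ 2 ≤ a ^ 2 * h ^ 2 + 2 * (a * h) := by nlinarith
  have hcosq : 1 - (h * α₁) ^ 2 / 2 ≤ Real.cos (h * α₁) := Real.one_sub_sq_div_two_le_cos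
  have hcospos : 0 < Real.cos (h * α₁) :=
    Real.cos_pos_of_mem_Ioo ⟨by linarith [Real.pi_div_two_pos], by linarith⟩
  have hcosbd : 1 ≤ Real.cos (h * α₁) * (1 + 2 * (a * h)) := by
    have hp : (0:ℝ) ≤ 1 + 2 * (a * h) := by positivity
    have hahsq : (a * h) * (a * h) ≤ (1 / 3) * (a * h) :=
      mul_le_mul_of_nonneg_right hah (by positivity)
    have hahcube : (a * h) * (a * h) * (a * h) ≤ (1 / 3) * ((1 / 3) * (a * h)) := by
      nlinarith [mul_pos ha hh]
    nlinarith [mul_le_mul_of_nonneg_right hxsq hp,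
      mul_le_mul_of_nonneg_right hcosq hp, mul_pos ha hh]
  -- lower bound : 2 a ≤ h (1 + 2 a h)(α₁² − a²)
  have hL : 2 * a ≤ h * (1 + 2 * (a * h)) * (α₁ ^ 2 - a ^ 2) := by
    have hsin : Real.sin (h * α₁) ≤ h * α₁ := sin_le_self hxpos.le
    have htan : Real.tan (h * α₁) ≤ h * α₁ * (1 + 2 * (a * h)) := by
      rw [Real.tan_eq_sin_div_cos, div_le_iff₀ hcospos]
      nlinarith
    rw [heq] at htan
    have hden : 0 < α₁ ^ 2 - a ^ 2 := by nlinarith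
    rw [div_le_iff₀ hden] at htan
    nlinarith
  -- main estimation
  intro z hz w hw s t hst
  obtain ⟨hCzlo, hCzhi⟩ := C_bound a h α₁ z ha hh hah hα₁pos hz.1 hz.2 hx1 hxsq
  obtain ⟨hCwlo, hCwhi⟩ := C_bound a h α₁ w ha hh hah hα₁pos hw.1 hw.2 hx1 hxsq
  have key := final_bound a h α₁ (α₁ * Real.cos (α₁ * z) + a * Real.sin (α₁ * z))
    (α₁ * Real.cos (α₁ * w) + a * Real.sin (α₁ * w)) ha hh hah hα₁pos haα hUh hL
    hCzlo hCzhi hCwlo hCwhi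
  have hEpos : 0 < Real.exp (-α₁ ^ 2 * (t - s)) := Real.exp_pos _
  have hre : 2 * Real.exp (-α₁ ^ 2 * (t - s)) *
        (α₁ * Real.cos (α₁ * z) + a * Real.sin (α₁ * z)) *
        (α₁ * Real.cos (α₁ * w) + a * Real.sin (α₁ * w)) /
        (2 * a + h * (a ^ 2 + α₁ ^ 2)) -
      α₁ ^ 2 / (2 * a) * Real.exp (-α₁ ^ 2 * (t - s)) =
      Real.exp (-α₁ ^ 2 * (t - s)) *
        (2 * (α₁ * Real.cos (α₁ * z) + a * Real.sin (α₁ * z)) *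
          (α₁ * Real.cos (α₁ * w) + a * Real.sin (α₁ * w)) /
          (2 * a + h * (a ^ 2 + α₁ ^ 2)) - α₁ ^ 2 / (2 * a)) := by
    ring
  rw [hre, abs_mul, abs_of_pos hEpos]
  have hfin := mul_le_mul_of_nonneg_left key hEpos.le
  linarith
end
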